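/- Define ψ_ρ(t) for partitions ρ by: |ρ|!·ψ_ρ(t) = (e^t - 1)^{r-1}·(e^{-t} - 1)^s if ρ is a hook (r, 1^s) with r ≥ 1, and ψ_ρ(t) = 0 otherwise. Then for every partition ρ, these functions satisfy the two differential relations: (a) ∑_{i=1}^{ℓ(ρ)+1} ψ'_{ρ^{(i)}}(t) = ∑_{i=1}^{ℓ(ρ)+1} (ρ_i - i + 1)·ψ_{ρ^{(i)}}(t), and (b) ∑_{i=1}^{ℓ(ρ)+1} (ρ_i - i + 1)·ψ'_{ρ^{(i)}}(t) = ∑_{i=1}^{ℓ(ρ)+1} (ρ_i - i + 1)²·ψ_{ρ^{(i)}}(t) + |ρ|·ψ_ρ(t). -/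

import Mathlib

open Finset PowerSeries

/-- The hook partition `(r, 1^s)` as a weakly decreasing function `ℕ → ℕ`
(0-indexed rows): part `r` in row `0`, parts `1` in rows `1,…,s`. -/
def hookFun (r s : ℕ) : ℕ → ℕ :=
  fun i => if i = 0 then r else if i ≤ s then 1 else 0

noncomputable section PsiAux

private def EE : PowerSeries ℚ := PowerSeries.exp ℚ
private def EN : PowerSeries ℚ := PowerSeries.rescale (-1 : ℚ) (PowerSeries.exp ℚ)
private def GG : PowerSeries ℚ := EE - 1
private def HH : PowerSeries ℚ := EN - 1
private def FF (r s : ℕ) : PowerSeries ℚ := GG ^ r * HH ^ s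

private lemma dEE : derivativeFun EE = EE := by
  ext n
  change coeff n (d⁄dX ℚ EE) = _
  rw [coeff_derivative]
  simp [EE, PowerSeries.coeff_exp, Nat.factorial_succ]
  field_simp

private lemma dEN : derivativeFun EN = -EN := by
  ext n
  change coeff n (d⁄dX ℚ EN) = _
  rw [coeff_derivative]
  simp [EN, PowerSeries.coeff_rescale, PowerSeries.coeff_exp, Nat.factorial_succ, pow_succ]
  field_simp

private lemma EEN : EE * EN = 1 := by
  have := PowerSeries.exp_mul_exp_eq_exp_add (1 : ℚ) (-1)
  simpa [EE, EN, PowerSeries.rescale_zero, PowerSeries.constantCoeff_exp] using this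

private lemma hEE : EE = GG + 1 := by unfold GG; ring

private lemma hEN : EN = HH + 1 := by unfold HH; ring

private lemma rel : GG * HH = -GG - HH := by
  have h : (GG + 1) * (HH + 1) = 1 := by rw [← hEE, ← hEN]; exact EEN
  linear_combination h

private lemma dGG : derivativeFun GG = EE := by
  have h1 : GG = EE + (-1) := by unfold GG; ring
  rw [h1, derivativeFun_add]
  have h : derivativeFun (-1 : PowerSeries ℚ) = 0 := by
    have := (derivative_C (R := ℚ) (r := -1) : derivativeFun (C (-1) : PowerSeries ℚ) = 0)
    rw [show (-1 : PowerSeries ℚ) = C (-1) by simp]; exact this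
  rw [h, dEE, add_zero]

private lemma dHH : derivativeFun HH = -EN := by
  have h1 : HH = EN + (-1) := by unfold HH; ring
  rw [h1, derivativeFun_add]
  have h : derivativeFun (-1 : PowerSeries ℚ) = 0 := by
    have := (derivative_C (R := ℚ) (r := -1) : derivativeFun (C (-1) : PowerSeries ℚ) = 0)
    rw [show (-1 : PowerSeries ℚ) = C (-1) by simp]; exact this
  rw [h, dEN, add_zero]

private lemma dpow (f : PowerSeries ℚ) (n : ℕ) :
    derivativeFun (f ^ (n+1)) = (n+1 : ℚ) • (f ^ n * derivativeFun f) := by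
  induction n with
  | zero => simp [derivativeFun_mul]
  | succ k ih =>
      rw [pow_succ, derivativeFun_mul, ih]
      simp only [smul_eq_C_mul, smul_eq_mul]
      push_cast
      simp only [map_add, map_one, map_neg, map_sub, map_natCast, map_ofNat, map_zero]
      ring

private lemma keyI (r s : ℕ) :
    derivativeFun (FF (r+1) s) = ((r:ℚ)+1) • FF (r+1) s + ((r:ℚ)+1+s) • FF r s := by
  cases s with
  | zero =>
      simp only [FF, pow_zero, mul_one]
      rw [dpow, dGG, hEE]
      simp only [smul_eq_C_mul]
      push_cast
      simp only [map_add, map_one, map_neg, map_sub, map_natCast, map_ofNat, map_zero]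
      ring
  | succ t =>
      simp only [FF]
      rw [derivativeFun_mul, dpow, dpow, dGG, dHH, hEE, hEN]
      simp only [smul_eq_C_mul, smul_eq_mul]
      push_cast
      simp only [map_add, map_one, map_neg, map_sub, map_natCast, map_ofNat, map_zero]
      linear_combination (-(t : PowerSeries ℚ)-1) * GG ^ r * HH ^ t * rel

private lemma keyII (r s : ℕ) :
    derivativeFun (FF r (s+1)) =
      (-(s:ℚ)-1) • FF r (s+1) + (-(r:ℚ)-(s:ℚ)-1) • FF r s := by
  cases r with
  | zero =>
      simp only [FF, pow_zero, one_mul]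
      rw [dpow, dHH, hEN]
      simp only [smul_eq_C_mul]
      push_cast
      simp only [map_add, map_one, map_neg, map_sub, map_natCast, map_ofNat, map_zero]
      ring
  | succ q =>
      simp only [FF]
      rw [derivativeFun_mul, dpow, dpow, dGG, dHH, hEE, hEN]
      simp only [smul_eq_C_mul, smul_eq_mul]
      push_cast
      simp only [map_add, map_one, map_neg, map_sub, map_natCast, map_ofNat, map_zero]
      linear_combination ((q : PowerSeries ℚ)+1) * GG ^ q * HH ^ s * rel

private lemma dzero : derivativeFun (0 : PowerSeries ℚ) = 0 := by
  exact map_zero (d⁄dX ℚ)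

private lemma sum_eq_pair_of {M : Type*} [AddCommMonoid M] {S : Finset ℕ} {a b : ℕ}
    (hab : a ≠ b) (ha : a ∈ S) (hb : b ∈ S) {f : ℕ → M}
    (h0 : ∀ i ∈ S, i ≠ a → i ≠ b → f i = 0) :
    ∑ i ∈ S, f i = f a + f b := by
  classical
  rw [← Finset.sum_subset (s₁ := {a, b})
    (Finset.insert_subset ha (Finset.singleton_subset_iff.mpr hb))
    (fun x hx hx' => h0 x hx (fun h => hx' (by simp [h])) (fun h => hx' (by simp [h])))]
  exact Finset.sum_pair hab

private lemma sum_eq_single_of {M : Type*} [AddCommMonoid M] {S : Finset ℕ} {a : ℕ}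
    (ha : a ∈ S) {f : ℕ → M}
    (h0 : ∀ i ∈ S, i ≠ a → f i = 0) :
    ∑ i ∈ S, f i = f a := by
  classical
  rw [← Finset.sum_subset (s₁ := {a}) (Finset.singleton_subset_iff.mpr ha)
    (fun x hx hx' => h0 x hx (fun h => hx' (by simp [h])))]
  exact Finset.sum_singleton _ _

end PsiAux

open scoped Classical in
/-- Proposition 6.3: the family `ψ_ρ` defined by
`|ρ|! ψ_ρ(t) = (eᵗ-1)^{r-1}(e^{-t}-1)^s` for hooks `ρ = (r,1^s)` with `r ≥ 1`
and `ψ_ρ = 0` for non-hooks satisfies, for every partition `ρ`, the relations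
(a) `∑ᵢ ψ'_{ρ^{(i)}} = ∑ᵢ (ρᵢ-i+1) ψ_{ρ^{(i)}}` and
(b) `∑ᵢ (ρᵢ-i+1) ψ'_{ρ^{(i)}} = ∑ᵢ (ρᵢ-i+1)² ψ_{ρ^{(i)}} + |ρ| ψ_ρ`,
where the sums run over those `i` for which `ρ^{(i)}` (a box added to row `i`)
is a partition.  Rows are 0-indexed, so `ρᵢ - i + 1` reads `ρ i - i`. -/
theorem psi_differential_system (ψ : (ℕ → ℕ) → PowerSeries ℚ)
    (hψhook : ∀ r s : ℕ, 1 ≤ r →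
      ((r + s).factorial : ℚ) • ψ (hookFun r s) =
        (PowerSeries.exp ℚ - 1) ^ (r - 1) *
          (PowerSeries.rescale (-1 : ℚ) (PowerSeries.exp ℚ) - 1) ^ s)
    (hψnonhook : ∀ ρ : ℕ → ℕ, Antitone ρ → (∃ l, ∀ i, l ≤ i → ρ i = 0) →
      2 ≤ ρ 1 → ψ ρ = 0)
    (l : ℕ) (ρ : ℕ → ℕ) (hanti : Antitone ρ) (hsupp : ∀ i, l ≤ i → ρ i = 0) :
    (∑ i ∈ (Finset.range (l + 1)).filter
          (fun i => Antitone (Function.update ρ i (ρ i + 1))),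
        PowerSeries.derivativeFun (ψ (Function.update ρ i (ρ i + 1))) =
      ∑ i ∈ (Finset.range (l + 1)).filter
          (fun i => Antitone (Function.update ρ i (ρ i + 1))),
        ((ρ i : ℚ) - (i : ℚ)) • ψ (Function.update ρ i (ρ i + 1))) ∧
    (∑ i ∈ (Finset.range (l + 1)).filter
          (fun i => Antitone (Function.update ρ i (ρ i + 1))),
        ((ρ i : ℚ) - (i : ℚ)) •
          PowerSeries.derivativeFun (ψ (Function.update ρ i (ρ i + 1))) =
      ∑ i ∈ (Finset.range (l + 1)).filter
          (fun i => Antitone (Function.update ρ i (ρ i + 1))),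
        ((ρ i : ℚ) - (i : ℚ)) ^ 2 • ψ (Function.update ρ i (ρ i + 1)) +
        ((∑ i ∈ Finset.range l, ρ i : ℕ) : ℚ) • ψ ρ) := by
  set S := (Finset.range (l + 1)).filter
      (fun i => Antitone (Function.update ρ i (ρ i + 1))) with hSdef
  by_cases h0 : ρ 0 = 0
  · -- Case A : ρ is the zero partition
    have hρ : ∀ i, ρ i = 0 := fun i => Nat.le_zero.mp (h0 ▸ hanti (Nat.zero_le i))
    have hupd : Function.update ρ 0 (ρ 0 + 1) = hookFun 1 0 := by
      funext i
      rcases Nat.eq_zero_or_pos i with hi | hi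
      · subst hi; simp [hρ 0, hookFun]
      · have hne : ¬ i = 0 := by omega
        rw [Function.update_of_ne hne]
        simp [hookFun, hρ i, hne]
    have hmem0 : 0 ∈ S := by
      rw [hSdef, Finset.mem_filter]
      refine ⟨by simp, antitone_nat_of_succ_le fun n => ?_⟩
      rcases Nat.eq_zero_or_pos n with hn | hn
      · subst hn
        rw [Function.update_of_ne (by omega), Function.update_self]
        simp [hρ 1]
      · rw [Function.update_of_ne (by omega), Function.update_of_ne (by omega)]
        simp [hρ n, hρ (n+1)]
    have honly : ∀ i ∈ S, i ≠ 0 → False := by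
      intro i hi hne
      obtain ⟨j, rfl⟩ := Nat.exists_eq_succ_of_ne_zero hne
      have h := (Finset.mem_filter.mp hi).2 (Nat.le_succ j)
      rw [Function.update_self, Function.update_of_ne (by omega), hρ j] at h
      omega
    have hψ1 : ψ (hookFun 1 0) = 1 := by
      have h := hψhook 1 0 le_rfl
      simpa using h
    have key : ∀ f : ℕ → PowerSeries ℚ, (∑ i ∈ S, f i) = f 0 := by
      intro f
      exact sum_eq_single_of hmem0 (fun i hi hne => absurd (honly i hi hne) not_false)
    constructor
    · rw [key, key, hupd, hψ1, derivativeFun_one]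
      simp [h0]
    · rw [key, key, hupd, hψ1, derivativeFun_one]
      have : (∑ i ∈ Finset.range l, ρ i) = 0 := Finset.sum_eq_zero (fun i _ => hρ i)
      rw [this]
      simp [h0]
  · by_cases h1 : 2 ≤ ρ 1
    · -- Case B : ρ is not a hook
      have hvan : ∀ i ∈ S, ψ (Function.update ρ i (ρ i + 1)) = 0 := by
        intro i hi
        obtain ⟨hrange, hanti'⟩ := Finset.mem_filter.mp hi
        have hil : i ≤ l := by simpa using Nat.lt_succ_iff.mp (Finset.mem_range.mp hrange)
        refine hψnonhook _ hanti' ⟨l + 1, fun j hj => ?_⟩ ?_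
        · rw [Function.update_of_ne (by omega)]
          exact hsupp j (by omega)
        · rcases eq_or_ne i 1 with h | h
          · subst h; rw [Function.update_self]; omega
          · rw [Function.update_of_ne (Ne.symm h)]; exact h1
      have hψρ : ψ ρ = 0 := hψnonhook ρ hanti ⟨l, hsupp⟩ h1
      constructor
      · rw [Finset.sum_eq_zero (fun i hi => by rw [hvan i hi, dzero]),
          Finset.sum_eq_zero (fun i hi => by rw [hvan i hi, smul_zero])]
      · rw [Finset.sum_eq_zero (fun i hi => by rw [hvan i hi, dzero, smul_zero]),
          Finset.sum_eq_zero (fun i hi => by rw [hvan i hi, smul_zero]), hψρ, smul_zero,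
          add_zero]
    · -- Case C : ρ is a hook (r'+1, 1^s)
      obtain ⟨r', hr⟩ := Nat.exists_eq_succ_of_ne_zero h0
      have hl : 1 ≤ l := by
        by_contra h
        exact h0 (hsupp 0 (by omega))
      set s := Nat.findGreatest (fun i => ρ i ≠ 0) l with hsdef
      have hρs : ρ s ≠ 0 := Nat.findGreatest_spec (P := fun i => ρ i ≠ 0) (Nat.zero_le l) h0
      have hsl : s ≤ l := Nat.findGreatest_le l
      have hzero : ∀ i, s < i → ρ i = 0 := by
        intro i hi
        rcases le_or_gt i l with h | h
        · by_contra hne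
          exact Nat.findGreatest_is_greatest (P := fun i => ρ i ≠ 0) hi h hne
        · exact hsupp i (by omega)
      have hslt : s < l := lt_of_le_of_ne hsl (fun h => hρs (h ▸ hsupp l le_rfl))
      have hone : ∀ i, 1 ≤ i → i ≤ s → ρ i = 1 := by
        intro i hi his
        have h2 := hanti his
        have h3 := hanti hi
        omega
      have hρfun : ρ = hookFun (r' + 1) s := by
        funext i
        rcases Nat.eq_zero_or_pos i with hi | hi
        · subst hi; simpa [hookFun] using hr
        · have hne : ¬ i = 0 := by omega
          rcases le_or_gt i s with his | his
          · simp [hookFun, hne, his, hone i hi his]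
          · have hns : ¬ i ≤ s := by omega
            simp [hookFun, hne, hns, hzero i his]
      have hupd0 : Function.update ρ 0 (ρ 0 + 1) = hookFun (r' + 2) s := by
        funext i
        rcases Nat.eq_zero_or_pos i with hi | hi
        · subst hi; simp [hookFun, hr]
        · have hne : ¬ i = 0 := by omega
          rw [Function.update_of_ne hne, hρfun]
          simp [hookFun, hne]
      have hupds : Function.update ρ (s+1) (ρ (s+1) + 1) = hookFun (r' + 1) (s+1) := by
        funext i
        rcases eq_or_ne i (s+1) with hi | hi
        · subst hi
          rw [Function.update_self, hzero (s+1) (by omega)]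
          simp [hookFun]
        · rw [Function.update_of_ne hi, hρfun]
          rcases Nat.eq_zero_or_pos i with h | h
          · subst h; simp [hookFun]
          · have hne : ¬ i = 0 := by omega
            rcases le_or_gt i s with his | his
            · have h1' : i ≤ s + 1 := by omega
              simp [hookFun, hne, his, h1']
            · have hns : ¬ i ≤ s := by omega
              have hns' : ¬ i ≤ s + 1 := by omega
              simp [hookFun, hne, hns, hns']
      have hmem0 : 0 ∈ S := by
        rw [hSdef, Finset.mem_filter]
        refine ⟨by simp, antitone_nat_of_succ_le fun n => ?_⟩
        rcases Nat.eq_zero_or_pos n with hn | hn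
        · subst hn
          rw [Function.update_of_ne (by omega), Function.update_self]
          have := hanti (Nat.zero_le (0+1))
          omega
        · rw [Function.update_of_ne (by omega), Function.update_of_ne (by omega)]
          exact hanti (Nat.le_succ n)
      have hmems : s + 1 ∈ S := by
        rw [hSdef, Finset.mem_filter]
        refine ⟨Finset.mem_range.mpr (by omega), antitone_nat_of_succ_le fun n => ?_⟩
        rcases eq_or_ne n (s+1) with hn | hn
        · subst hn
          rw [Function.update_of_ne (by omega), Function.update_self,
            hzero (s+1) (by omega), hzero (s+2) (by omega)]
          omega
        · rcases eq_or_ne (n+1) (s+1) with hn' | hn'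
          · rw [hn', Function.update_self, Function.update_of_ne (by omega),
              hzero (s+1) (by omega)]
            have : n = s := by omega
            subst this
            omega
          · rw [Function.update_of_ne hn', Function.update_of_ne hn]
            exact hanti (Nat.le_succ n)
      have hvan : ∀ i ∈ S, i ≠ 0 → i ≠ s + 1 → ψ (Function.update ρ i (ρ i + 1)) = 0 := by
        intro i hi hne0 hnes
        obtain ⟨hrange, hanti'⟩ := Finset.mem_filter.mp hi
        -- the update can only be antitone if i = 1 (and then it is not a hook)
        have hi1 : i = 1 := by
          by_contra hne1
          have h2 : 2 ≤ i := by omega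
          have h := hanti' (Nat.sub_le i 1)
          rw [Function.update_self, Function.update_of_ne (by omega)] at h
          rcases le_or_gt i s with his | his
          · have := hone (i-1) (by omega) (by omega)
            have := hone i (by omega) his
            omega
          · have := hzero (i-1) (by omega)
            omega
        subst hi1
        have hs1 : 1 ≤ s := by omega
        refine hψnonhook _ hanti' ⟨l + 1, fun j hj => ?_⟩ ?_
        · rw [Function.update_of_ne (by omega)]
          exact hsupp j (by omega)
        · rw [Function.update_self, hone 1 le_rfl hs1]
      -- values of ψ on the three relevant hooks
      have hfact : ∀ n : ℕ, ((n.factorial : ℚ)) ≠ 0 :=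
        fun n => Nat.cast_ne_zero.mpr n.factorial_ne_zero
      set a : ℚ := ((r' + s + 1).factorial : ℚ)⁻¹ with hadef
      set q : ℚ := ((r' + s + 2 : ℕ) : ℚ) with hqdef
      have hq0 : q ≠ 0 := by
        rw [hqdef]
        push_cast
        positivity
      have hfs : (((r' + s + 2).factorial : ℚ)) = q * a⁻¹ := by
        rw [hadef, inv_inv, hqdef, (by omega : r' + s + 2 = (r' + s + 1) + 1),
          Nat.factorial_succ]
        push_cast
        ring
      have hval : ∀ u v : ℕ, u + v = r' + s + 1 →
          ψ (hookFun (u + 1) v) = (q⁻¹ * a) • FF u v := by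
        intro u v huv
        have h := hψhook (u+1) v (by omega)
        have harg : u + 1 + v = r' + s + 2 := by omega
        rw [harg, (by omega : u + 1 - 1 = u)] at h
        have hFF : FF u v =
            (PowerSeries.exp ℚ - 1) ^ u *
              (PowerSeries.rescale (-1 : ℚ) (PowerSeries.exp ℚ) - 1) ^ v := by
          simp only [FF, GG, HH, EE, EN]
        have : ψ (hookFun (u+1) v) = (((r' + s + 2).factorial : ℚ))⁻¹ • (FF u v) := by
          rw [hFF, ← h, smul_smul, inv_mul_cancel₀ (hfact _), one_smul]
        rw [this, hfs]
        rw [mul_inv, inv_inv, mul_comm]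
      have hvalρ : ψ ρ = a • FF r' s := by
        have h := hψhook (r'+1) s (by omega)
        rw [(by omega : r' + 1 + s = r' + s + 1), (by omega : r' + 1 - 1 = r')] at h
        have hFF : FF r' s =
            (PowerSeries.exp ℚ - 1) ^ r' *
              (PowerSeries.rescale (-1 : ℚ) (PowerSeries.exp ℚ) - 1) ^ s := by
          simp only [FF, GG, HH, EE, EN]
        rw [hρfun, hFF, ← h, smul_smul, hadef, inv_mul_cancel₀ (hfact _), one_smul]
      have hψ0 : ψ (Function.update ρ 0 (ρ 0 + 1)) = (q⁻¹ * a) • FF (r' + 1) s := by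
        rw [hupd0, (by omega : r' + 2 = (r' + 1) + 1)]
        exact hval (r'+1) s (by omega)
      have hψ1 : ψ (Function.update ρ (s+1) (ρ (s+1) + 1)) = (q⁻¹ * a) • FF r' (s+1) := by
        rw [hupds]
        exact hval r' (s+1) (by omega)
      have hsize : (∑ i ∈ Finset.range l, ρ i) = r' + s + 1 := by
        have hsub : Finset.range (s+1) ⊆ Finset.range l :=
          Finset.range_subset_range.mpr (by omega)
        rw [← Finset.sum_subset hsub (fun x hx hx' => by
          have : s < x := by
            simp only [Finset.mem_range] at hx'
            omega
          exact hzero x this)]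
        rw [Finset.sum_range_succ' ρ s, hr]
        have : ∀ i ∈ Finset.range s, ρ (i + 1) = 1 :=
          fun i hi => hone (i+1) (by omega) (by simpa using Finset.mem_range.mp hi)
        rw [Finset.sum_congr rfl this]
        simp
        omega
      have hpair : ∀ f : ℕ → PowerSeries ℚ,
          (∀ i ∈ S, i ≠ 0 → i ≠ s + 1 → f i = 0) →
          (∑ i ∈ S, f i) = f 0 + f (s+1) := by
        intro f hf
        exact sum_eq_pair_of (by omega) hmem0 hmems hf
      have hc0 : ((ρ 0 : ℚ) - ((0:ℕ) : ℚ)) = (r' : ℚ) + 1 := by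
        rw [hr]; push_cast; ring
      have hcs : ((ρ (s+1) : ℚ) - (((s+1):ℕ) : ℚ)) = -((s:ℚ)+1) := by
        rw [hzero (s+1) (by omega)]; push_cast; ring
      constructor
      · rw [hpair _ (fun i hi h1 h2 => by rw [hvan i hi h1 h2, dzero]),
          hpair _ (fun i hi h1 h2 => by rw [hvan i hi h1 h2, smul_zero]),
          hψ0, hψ1, hc0, hcs, derivativeFun_smul, derivativeFun_smul, keyI, keyII]
        match_scalars <;> ring
      · rw [hpair _ (fun i hi h1 h2 => by rw [hvan i hi h1 h2, dzero, smul_zero]),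
          hpair _ (fun i hi h1 h2 => by rw [hvan i hi h1 h2, smul_zero]),
          hψ0, hψ1, hc0, hcs, derivativeFun_smul, derivativeFun_smul, keyI, keyII,
          hvalρ, hsize]
        match_scalars <;> field_simp [hq0] <;> (try simp only [hqdef]) <;> push_cast <;> ring
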